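/- Let G be a graph and H an induced subgraph of G isomorphic to S(K_{1,3}) (the subdivision of K_{1,3}) such that no vertex of H other than its center has a neighbor in G outside H. Then every strong Roman dominating function of G has total weight at least 6 on the vertices of H. -/

import Mathlib

namespace SimpleGraph

variable {V : Type*}

/-- The degree of a vertex (cardinality of its open neighborhood). -/
noncomputable def deg (G : SimpleGraph V) (v : V) : ℕ := (G.neighborSet v).ncard

/-- Maximum degree. -/
noncomputable def maxDeg [Fintype V] (G : SimpleGraph V) : ℕ :=
  Finset.univ.sup fun v => G.deg v

/-- A strong Roman dominating function: `f : V → {0,1,...,⌈Δ/2⌉+1}` such that every vertex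
with value 0 has a neighbor `w` with `f w ≥ 2` and `f w ≥ 1 + ⌈|N(w) ∩ B₀|/2⌉`. -/
def IsStRDF [Fintype V] (G : SimpleGraph V) (f : V → ℕ) : Prop :=
  (∀ v, f v ≤ (G.maxDeg + 1) / 2 + 1) ∧
  ∀ v, f v = 0 → ∃ w, G.Adj v w ∧ 2 ≤ f w ∧
    1 + ((G.neighborSet w ∩ {u | f u = 0}).ncard + 1) / 2 ≤ f w

/-- The strong Roman domination number. -/
noncomputable def gammaStR [Fintype V] (G : SimpleGraph V) : ℕ :=
  sInf {k | ∃ f, G.IsStRDF f ∧ ∑ v, f v = k}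

/-- A Roman dominating function. -/
def IsRDF (G : SimpleGraph V) (f : V → ℕ) : Prop :=
  (∀ v, f v ≤ 2) ∧ ∀ v, f v = 0 → ∃ w, G.Adj v w ∧ f w = 2

/-- The Roman domination number. -/
noncomputable def gammaR [Fintype V] (G : SimpleGraph V) : ℕ :=
  sInf {k | ∃ f, G.IsRDF f ∧ ∑ v, f v = k}

/-- A dominating set. -/
def IsDomSet (G : SimpleGraph V) (D : Set V) : Prop :=
  ∀ v ∉ D, ∃ w ∈ D, G.Adj v w

/-- The domination number. -/
noncomputable def gammaDom [Fintype V] (G : SimpleGraph V) : ℕ :=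
  sInf {k | ∃ D : Set V, G.IsDomSet D ∧ D.ncard = k}

end SimpleGraph


/-- The spider obtained from the star `K_{1,t}` by subdividing the first `q` edges
(`q ≤ t`). `none` is the center, `some (.inl i)` is the leaf `vᵢ`, and `some (.inr j)`
is the subdivision vertex `uⱼ` on the edge to leaf `v_j` (for `j < q`). -/
def spiderGraph (t q : ℕ) : SimpleGraph (Option (Fin t ⊕ Fin q)) where
  Adj a b :=
    (∃ i : Fin t, q ≤ (i : ℕ) ∧
      ((a = none ∧ b = some (.inl i)) ∨ (b = none ∧ a = some (.inl i)))) ∨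
    (∃ j : Fin q,
      (a = none ∧ b = some (.inr j)) ∨ (b = none ∧ a = some (.inr j))) ∨
    (∃ (i : Fin t) (j : Fin q), (i : ℕ) = (j : ℕ) ∧
      ((a = some (.inl i) ∧ b = some (.inr j)) ∨ (b = some (.inl i) ∧ a = some (.inr j))))
  symm := by
    constructor
    rintro a b (⟨i, hi, h⟩ | ⟨j, h⟩ | ⟨i, j, hij, h⟩)
    · exact Or.inl ⟨i, hi, h.symm⟩
    · exact Or.inr (Or.inl ⟨j, h.symm⟩)
    · exact Or.inr (Or.inr ⟨i, j, hij, h.symm⟩)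
  loopless := by
    constructor
    rintro a (⟨i, hi, (⟨h1, h2⟩ | ⟨h1, h2⟩)⟩ | ⟨j, (⟨h1, h2⟩ | ⟨h1, h2⟩)⟩ |
      ⟨i, j, hij, (⟨h1, h2⟩ | ⟨h1, h2⟩)⟩) <;> simp_all

/-- If `H` is an induced subgraph of `G` isomorphic to `S(K_{1,3})` such that no vertex
of `H` other than its center has a neighbor in `G` outside `H`, then every strong Roman
dominating function of `G` has total weight at least 6 on the vertices of `H`. -/
theorem stmt18 {V : Type*} [Fintype V] (G : SimpleGraph V)
    (φ : Option (Fin 3 ⊕ Fin 3) → V) (hinj : Function.Injective φ)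
    (hind : ∀ a b, G.Adj (φ a) (φ b) ↔ (spiderGraph 3 3).Adj a b)
    (hout : ∀ a, a ≠ none → ∀ w, w ∉ Set.range φ → ¬ G.Adj (φ a) w)
    (f : V → ℕ) (hf : G.IsStRDF f) :
    6 ≤ ∑ a, f (φ a) := by
  classical
  obtain ⟨-, hdom⟩ := hf
  set c0 := f (φ none) with hc0
  set m := ((G.neighborSet (φ none)) ∩ {u | f u = 0}).ncard with hm
  -- every neighbor of a leaf is the corresponding subdivision vertex
  have leafnb : ∀ (i : Fin 3) (w : V), G.Adj (φ (some (.inl i))) w →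
      w = φ (some (.inr i)) := by
    intro i w hw
    by_cases hr : w ∈ Set.range φ
    · obtain ⟨b, rfl⟩ := hr
      have h := (hind _ _).1 hw
      simp only [spiderGraph] at h
      rcases h with ⟨i', hi', h⟩ | ⟨j, h⟩ | ⟨i', j, hij, h⟩
      · have := i'.isLt; rcases h with ⟨h1, h2⟩ | ⟨h1, h2⟩ <;> omega
      · rcases h with ⟨h1, h2⟩ | ⟨h1, h2⟩ <;> simp_all
      · rcases h with ⟨h1, h2⟩ | ⟨h1, h2⟩
        · have hii : i = i' := by simpa using h1
          subst hii
          have hji : j = i := Fin.ext hij.symm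
          subst hji
          rw [h2]
        · simp at h2
    · exact absurd hw (hout _ (by simp) w hr)
  -- every neighbor of a subdivision vertex is the center or the corresponding leaf
  have subnb : ∀ (j : Fin 3) (w : V), G.Adj (φ (some (.inr j))) w →
      w = φ none ∨ w = φ (some (.inl j)) := by
    intro j w hw
    by_cases hr : w ∈ Set.range φ
    · obtain ⟨b, rfl⟩ := hr
      have h := (hind _ _).1 hw
      simp only [spiderGraph] at h
      rcases h with ⟨i', hi', h⟩ | ⟨j', h⟩ | ⟨i', j', hij, h⟩
      · have := i'.isLt; rcases h with ⟨h1, h2⟩ | ⟨h1, h2⟩ <;> omega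
      · rcases h with ⟨h1, h2⟩ | ⟨h1, h2⟩
        · simp at h1
        · exact Or.inl (by rw [h1])
      · rcases h with ⟨h1, h2⟩ | ⟨h1, h2⟩
        · simp at h1
        · have hj : j = j' := by simpa using h2
          subst hj
          have hij' : i' = j := Fin.ext hij
          subst hij'
          exact Or.inr (by rw [h1])
    · exact absurd hw (hout _ (by simp) w hr)
  -- the center is adjacent to each subdivision vertex
  have cadj : ∀ j : Fin 3, G.Adj (φ none) (φ (some (.inr j))) := by
    intro j
    rw [hind]
    exact Or.inr (Or.inl ⟨j, Or.inl ⟨rfl, rfl⟩⟩)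
  -- if a leaf has value 0, its subdivision vertex has value ≥ 2
  have L1 : ∀ i : Fin 3, f (φ (some (.inl i))) = 0 → 2 ≤ f (φ (some (.inr i))) := by
    intro i h
    obtain ⟨w, hadj, h2, -⟩ := hdom _ h
    rwa [leafnb i w hadj] at h2
  -- the key per-index dichotomy
  have key : ∀ i : Fin 3,
      2 ≤ f (φ (some (.inl i))) + f (φ (some (.inr i))) ∨
      (f (φ (some (.inl i))) = 1 ∧ f (φ (some (.inr i))) = 0 ∧
        2 ≤ c0 ∧ 1 + (m + 1) / 2 ≤ c0) := by
    intro i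
    by_cases hb : f (φ (some (.inr i))) = 0
    · obtain ⟨w, hadj, h2, h3⟩ := hdom _ hb
      rcases subnb i w hadj with rfl | rfl
      · by_cases ha : 2 ≤ f (φ (some (.inl i)))
        · exact Or.inl (by omega)
        · right
          have ha0 : f (φ (some (.inl i))) ≠ 0 := fun h0 => by
            have := L1 i h0; omega
          exact ⟨by omega, hb, h2, h3⟩
      · exact Or.inl (by omega)
    · by_cases ha : f (φ (some (.inl i))) = 0
      · exact Or.inl (by have := L1 i ha; omega)
      · exact Or.inl (by omega)
  -- rewrite the sum
  rw [Fintype.sum_option, Fintype.sum_sum_type]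
  simp only [Fin.sum_univ_three]
  rcases key 0 with h0 | ⟨ha0, hb0, hc0', hcm0⟩ <;>
    rcases key 1 with h1 | ⟨ha1, hb1, hc1', hcm1⟩ <;>
    rcases key 2 with h2 | ⟨ha2, hb2, hc2', hcm2⟩
  all_goals try omega
  -- all three pairs are bad
  have hsub : ({φ (some (.inr 0)), φ (some (.inr 1)), φ (some (.inr 2))} : Set V)
      ⊆ G.neighborSet (φ none) ∩ {u | f u = 0} := by
    intro x hx
    rcases hx with rfl | rfl | rfl
    · exact ⟨cadj 0, hb0⟩
    · exact ⟨cadj 1, hb1⟩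
    · exact ⟨cadj 2, hb2⟩
  have hcard : ({φ (some (.inr 0)), φ (some (.inr 1)), φ (some (.inr 2))} : Set V).ncard = 3 := by
    rw [Set.ncard_eq_three]
    exact ⟨_, _, _, hinj.ne (by simp), hinj.ne (by simp), hinj.ne (by simp), rfl⟩
  have hm3 : 3 ≤ m :=
    le_trans (le_of_eq hcard.symm) (Set.ncard_le_ncard hsub (Set.toFinite _))
  omega
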